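/- Let M ≥ 2, let X₁, …, X_{M−1}, Y be independent rate-1 exponential random variables, let Z = max{X₁, …, X_{M−1}}, and let R > 0. Then user M's power diversity gain equals M: lim_{ρ→∞} −log P( e^R Y ≤ Z ≤ e^R(e^R − 1)/ρ ) / log ρ = M. -/

import Mathlib

open MeasureTheory ProbabilityTheory Filter

lemma exp_map_Iic {Ω : Type*} [MeasurableSpace Ω] (μ : Measure Ω) (f : Ω → ℝ)
    (hf : Measurable f) (h : μ.map f = expMeasure 1) (a : ℝ) (ha : 0 ≤ a) :
    μ (f ⁻¹' Set.Iic a) = ENNReal.ofReal (1 - Real.exp (-a)) := by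
  have : IsProbabilityMeasure (expMeasure 1) := isProbabilityMeasure_expMeasure one_pos
  rw [← Measure.map_apply hf measurableSet_Iic, h, ← ofReal_cdf]
  congr 1
  have h2 := cdf_expMeasure_eq one_pos a
  simp only [if_pos ha, one_mul] at h2
  exact h2

lemma Fm_nonneg {a : ℝ} (ha : 0 ≤ a) : 0 ≤ 1 - Real.exp (-a) := by
  have : Real.exp (-a) ≤ 1 := Real.exp_le_one_iff.mpr (by linarith)
  linarith

lemma Fm_le {a : ℝ} (_ha : 0 ≤ a) : 1 - Real.exp (-a) ≤ a := by
  have := Real.add_one_le_exp (-a)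
  linarith

lemma Fm_ge {a : ℝ} (ha : 0 ≤ a) (ha1 : a ≤ 1) :
    Real.exp (-1) * a ≤ 1 - Real.exp (-a) := by
  have h1 : a + 1 ≤ Real.exp a := Real.add_one_le_exp a
  have h2 : Real.exp (-a) * Real.exp a = 1 := by rw [← Real.exp_add]; simp
  have h3 : Real.exp (-a) ≤ 1 := Real.exp_le_one_iff.mpr (by linarith)
  have h4 : Real.exp (-1) ≤ Real.exp (-a) := Real.exp_le_exp.mpr (by linarith)
  have h5 : 0 < Real.exp (-a) := Real.exp_pos _
  -- a * exp(-a) ≤ 1 - exp(-a)  ⟺  exp(-a) * (a+1) ≤ 1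
  have h6 : Real.exp (-a) * (a + 1) ≤ 1 := by
    calc Real.exp (-a) * (a + 1) ≤ Real.exp (-a) * Real.exp a :=
          mul_le_mul_of_nonneg_left h1 h5.le
      _ = 1 := h2
  nlinarith [mul_le_mul_of_nonneg_right h4 ha]

set_option maxHeartbeats 1000000 in
/-- User M's power diversity gain equals `M`: with `Z` the largest of `M-1` i.i.d. rate-1
exponential channel gains and `Y` a further independent rate-1 exponential gain,
`-log P(e^R Y ≤ Z ≤ e^R(e^R - 1)/ρ) / log ρ → M` as `ρ → ∞`. -/
theorem stmt_17 {Ω : Type*} [MeasurableSpace Ω] (μ : Measure Ω) [IsProbabilityMeasure μ]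
    (M : ℕ) (hM : 2 ≤ M)
    (V : Fin M → Ω → ℝ) (hmeas : ∀ i, Measurable (V i))
    (hindep : iIndepFun V μ)
    (hdist : ∀ i, μ.map (V i) = expMeasure 1)
    (Y Z : Ω → ℝ)
    (hY : Y = V ⟨M - 1, by omega⟩)
    (hZ : ∀ ω, Z ω = (Finset.univ.filter (fun i : Fin M => (i : ℕ) < M - 1)).sup'
        (⟨⟨0, by omega⟩, by simp [Finset.mem_filter]; omega⟩) (fun i => V i ω))
    (R : ℝ) (hR : 0 < R) :
    Tendsto (fun ρ : ℝ =>
        -Real.log (μ {ω | Real.exp R * Y ω ≤ Z ω ∧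
            Z ω ≤ Real.exp R * (Real.exp R - 1) / ρ}).toReal / Real.log ρ)
      atTop (nhds (M : ℝ)) := by
  have hexpR : (1:ℝ) < Real.exp R := by
    calc (1:ℝ) = Real.exp 0 := (Real.exp_zero).symm
      _ < Real.exp R := Real.exp_lt_exp.mpr hR
  set K : ℝ := Real.exp R * (Real.exp R - 1) with hKdef
  have hK : 0 < K := mul_pos (Real.exp_pos R) (by linarith)
  set iM : Fin M := ⟨M - 1, by omega⟩ with hiM
  set i0 : Fin M := ⟨0, by omega⟩ with hi0
  have hi0M : i0 ≠ iM := by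
    simp only [hi0, hiM, Ne, Fin.mk.injEq]; omega
  set Ev : ℝ → Set Ω := fun t => {ω | Real.exp R * Y ω ≤ Z ω ∧ Z ω ≤ t} with hEv
  set c1 : ℝ := Real.exp (-(1 + R)) / 4 with hc1def
  have hc1 : 0 < c1 := by positivity
  -- Upper bound
  have hup : ∀ t : ℝ, 0 ≤ t → (μ (Ev t)).toReal ≤ Real.exp (-R) * t ^ M := by
    intro t ht
    set a : Fin M → ℝ := fun i => if i = iM then Real.exp (-R) * t else t with ha
    have hanon : ∀ i, 0 ≤ a i := by
      intro i; simp only [ha]; split_ifs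
      · positivity
      · exact ht
    have hsub : Ev t ⊆ ⋂ i, V i ⁻¹' Set.Iic (a i) := by
      rintro ω ⟨h1, h2⟩
      simp only [Set.mem_iInter, Set.mem_preimage, Set.mem_Iic]
      intro i
      by_cases hi : i = iM
      · subst hi
        simp only [ha, if_pos rfl]
        rw [hY] at h1
        have hEp : 0 < Real.exp R := Real.exp_pos R
        have : Real.exp R * V iM ω ≤ t := le_trans h1 h2
        rw [Real.exp_neg, inv_mul_eq_div, le_div_iff₀ hEp, mul_comm]
        exact this
      · simp only [ha, if_neg hi]
        have hilt : (i : ℕ) < M - 1 := by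
          have := i.isLt
          have : (i:ℕ) ≠ M - 1 := fun h => hi (by simp [hiM, Fin.ext_iff, h])
          omega
        have hmem : i ∈ Finset.univ.filter (fun j : Fin M => (j : ℕ) < M - 1) := by
          simp [hilt]
        have := Finset.le_sup' (fun j => V j ω) hmem
        rw [← hZ ω] at this
        exact le_trans this h2
    have hmeasInt := hindep.meas_iInter (s := fun i => V i ⁻¹' Set.Iic (a i))
      (fun i => ⟨Set.Iic (a i), measurableSet_Iic, rfl⟩)
    have step1 : (μ (Ev t)).toReal ≤ (μ (⋂ i, V i ⁻¹' Set.Iic (a i))).toReal :=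
      ENNReal.toReal_mono (measure_ne_top μ _) (measure_mono hsub)
    rw [hmeasInt, ENNReal.toReal_prod] at step1
    have step2 : ∀ i, (μ (V i ⁻¹' Set.Iic (a i))).toReal = 1 - Real.exp (-(a i)) := by
      intro i
      rw [exp_map_Iic μ (V i) (hmeas i) (hdist i) (a i) (hanon i),
        ENNReal.toReal_ofReal (Fm_nonneg (hanon i))]
    have step3 : ∏ i, (μ (V i ⁻¹' Set.Iic (a i))).toReal ≤ ∏ i, a i := by
      apply Finset.prod_le_prod
      · intro i _; rw [step2 i]; exact Fm_nonneg (hanon i)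
      · intro i _; rw [step2 i]; exact Fm_le (hanon i)
    have step4 : ∏ i, a i = Real.exp (-R) * t ^ M := by
      rw [← Finset.mul_prod_erase Finset.univ a (Finset.mem_univ iM)]
      have : ∏ i ∈ Finset.univ.erase iM, a i = t ^ (M - 1) := by
        rw [Finset.prod_congr rfl (fun i hi => ?_), Finset.prod_const,
          Finset.card_erase_of_mem (Finset.mem_univ iM), Finset.card_univ, Fintype.card_fin]
        · simp only [ha, if_neg (Finset.mem_erase.mp hi).1]
      rw [this]
      simp only [ha, if_pos rfl]
      have hMsub : M - 1 + 1 = M := by omega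
      rw [mul_assoc, ← pow_succ' t (M-1), hMsub]
    calc (μ (Ev t)).toReal ≤ ∏ i, (μ (V i ⁻¹' Set.Iic (a i))).toReal := step1
      _ ≤ ∏ i, a i := step3
      _ = Real.exp (-R) * t ^ M := step4
  -- Lower bound
  have hlow : ∀ t : ℝ, 0 < t → t ≤ 1 → (c1 * t) ^ M ≤ (μ (Ev t)).toReal := by
    intro t ht ht1
    set S : Fin M → Set ℝ := fun i =>
      if i = iM then Set.Iic (Real.exp (-R) * t / 2)
      else if i = i0 then Set.Ioc (t/2) t else Set.Iic (t/2) with hS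
    have hSmeas : ∀ i, MeasurableSet (S i) := by
      intro i; simp only [hS]; split_ifs
      exacts [measurableSet_Iic, measurableSet_Ioc, measurableSet_Iic]
    have hSiM : S iM = Set.Iic (Real.exp (-R) * t / 2) := by simp [hS]
    have hSi0 : S i0 = Set.Ioc (t/2) t := by simp [hS, hi0M]
    have hSo : ∀ i, i ≠ iM → i ≠ i0 → S i = Set.Iic (t/2) := by
      intro i h1 h2; simp [hS, h1, h2]
    have hsub : (⋂ i, V i ⁻¹' S i) ⊆ Ev t := by
      intro ω hω
      simp only [Set.mem_iInter, Set.mem_preimage] at hω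
      have hexpnR : 0 < Real.exp (-R) := Real.exp_pos _
      have hZle : Z ω ≤ t := by
        rw [hZ]
        apply Finset.sup'_le
        intro i hi
        have hilt : (i : ℕ) < M - 1 := (Finset.mem_filter.mp hi).2
        have hiM' : i ≠ iM := fun h => by simp [hiM, Fin.ext_iff] at h; omega
        have hωi := hω i
        by_cases h0 : i = i0
        · subst h0; rw [hSi0] at hωi; exact hωi.2
        · rw [hSo i hiM' h0] at hωi
          simp only [Set.mem_Iic] at hωi; linarith
      have hmem0 : i0 ∈ Finset.univ.filter (fun j : Fin M => (j : ℕ) < M - 1) := by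
        simp [hi0]; omega
      have hZge : t / 2 ≤ Z ω := by
        have h1 := Finset.le_sup' (fun j => V j ω) hmem0
        rw [← hZ ω] at h1
        have h2 := hω i0
        rw [hSi0] at h2
        linarith [h2.1]
      refine ⟨?_, hZle⟩
      have h3 := hω iM
      rw [hSiM] at h3
      simp only [Set.mem_Iic] at h3
      rw [hY]
      have hE : Real.exp R * (Real.exp (-R) * t / 2) = t / 2 := by
        rw [Real.exp_neg]
        field_simp
      calc Real.exp R * V iM ω ≤ Real.exp R * (Real.exp (-R) * t / 2) :=
            mul_le_mul_of_nonneg_left h3 (Real.exp_pos R).le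
        _ = t / 2 := hE
        _ ≤ Z ω := hZge
    have hmeasInt := hindep.meas_iInter (s := fun i => V i ⁻¹' S i)
      (fun i => ⟨S i, hSmeas i, rfl⟩)
    -- each factor is at least c1 * t
    have hfac : ∀ i, c1 * t ≤ (μ (V i ⁻¹' S i)).toReal := by
      intro i
      have he1 : Real.exp (-(1+R)) ≤ Real.exp (-1) := Real.exp_le_exp.mpr (by linarith)
      have he1' : 0 < Real.exp (-(1+R)) := Real.exp_pos _
      by_cases hi : i = iM
      · subst hi
        rw [hSiM]
        have ha0 : (0:ℝ) ≤ Real.exp (-R) * t / 2 := by positivity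
        rw [exp_map_Iic μ _ (hmeas _) (hdist _) _ ha0,
          ENNReal.toReal_ofReal (Fm_nonneg ha0)]
        have ha1 : Real.exp (-R) * t / 2 ≤ 1 := by
          have : Real.exp (-R) ≤ 1 := Real.exp_le_one_iff.mpr (by linarith)
          nlinarith
        have := Fm_ge ha0 ha1
        have hER : Real.exp (-1) * Real.exp (-R) = Real.exp (-(1+R)) := by
          rw [← Real.exp_add]; ring_nf
        calc c1 * t = Real.exp (-(1+R)) * t / 4 := by rw [hc1def]; ring
          _ ≤ Real.exp (-(1+R)) * t / 2 := by nlinarith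
          _ = Real.exp (-1) * (Real.exp (-R) * t / 2) := by rw [← hER]; ring
          _ ≤ 1 - Real.exp (-(Real.exp (-R) * t / 2)) := this
      · by_cases h0 : i = i0
        · subst h0
          rw [hSi0]
          have hIoc : V i0 ⁻¹' Set.Ioc (t/2) t = V i0 ⁻¹' Set.Iic t \ V i0 ⁻¹' Set.Iic (t/2) := by
            ext ω; simp only [Set.mem_preimage, Set.mem_Ioc, Set.mem_diff, Set.mem_Iic, not_le]; tauto
          rw [hIoc, measure_diff (Set.preimage_mono (Set.Iic_subset_Iic.mpr (by linarith)))
            ((hmeas i0 measurableSet_Iic).nullMeasurableSet) (measure_ne_top μ _)]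
          rw [exp_map_Iic μ _ (hmeas _) (hdist _) t ht.le,
            exp_map_Iic μ _ (hmeas _) (hdist _) (t/2) (by linarith)]
          rw [← ENNReal.ofReal_sub _ (Fm_nonneg (by linarith : (0:ℝ) ≤ t/2))]
          rw [ENNReal.toReal_ofReal (by
            have : Real.exp (-t) ≤ Real.exp (-(t/2)) := Real.exp_le_exp.mpr (by linarith)
            linarith)]
          -- goal : c1 * t ≤ (1 - exp (-t)) - (1 - exp (-(t/2)))
          have hkey : Real.exp (-t) * Real.exp (t/2) = Real.exp (-(t/2)) := by
            rw [← Real.exp_add]; ring_nf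
          have h2 : t/2 + 1 ≤ Real.exp (t/2) := Real.add_one_le_exp _
          have h3 : Real.exp (-1) ≤ Real.exp (-t) := Real.exp_le_exp.mpr (by linarith)
          have h5 : 0 < Real.exp (-t) := Real.exp_pos _
          have h6 : Real.exp (-t) * (t/2) ≤ Real.exp (-(t/2)) - Real.exp (-t) := by
            nlinarith
          have h7 : Real.exp (-1) * (t/2) ≤ Real.exp (-t) * (t/2) :=
            mul_le_mul_of_nonneg_right h3 (by linarith)
          have h8 : c1 * t ≤ Real.exp (-1) * (t/2) := by
            rw [hc1def]
            nlinarith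
          linarith
        · rw [hSo i hi h0]
          have ha0 : (0:ℝ) ≤ t/2 := by linarith
          rw [exp_map_Iic μ _ (hmeas _) (hdist _) _ ha0,
            ENNReal.toReal_ofReal (Fm_nonneg ha0)]
          have := Fm_ge ha0 (by linarith)
          calc c1 * t ≤ Real.exp (-1) * (t/2) := by rw [hc1def]; nlinarith
            _ ≤ 1 - Real.exp (-(t/2)) := this
    have hprod : (c1 * t) ^ M ≤ ∏ i, (μ (V i ⁻¹' S i)).toReal := by
      calc (c1 * t) ^ M = ∏ _i : Fin M, (c1 * t) := by
            rw [Finset.prod_const, Finset.card_univ, Fintype.card_fin]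
        _ ≤ ∏ i, (μ (V i ⁻¹' S i)).toReal :=
            Finset.prod_le_prod (fun i _ => by positivity) (fun i _ => hfac i)
    have hmono : (μ (⋂ i, V i ⁻¹' S i)).toReal ≤ (μ (Ev t)).toReal :=
      ENNReal.toReal_mono (measure_ne_top μ _) (measure_mono hsub)
    rw [hmeasInt, ENNReal.toReal_prod] at hmono
    linarith [hprod]
  -- Final squeeze
  have hloginv : Tendsto (fun ρ : ℝ => (Real.log ρ)⁻¹) atTop (nhds 0) :=
    Real.tendsto_log_atTop.inv_tendsto_atTop
  have hglim : Tendsto (fun ρ : ℝ => (M:ℝ) + (R - M * Real.log K) * (Real.log ρ)⁻¹)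
      atTop (nhds (M : ℝ)) := by
    have := tendsto_const_nhds (x := (M:ℝ)) (f := atTop (α := ℝ))
    have h2 : Tendsto (fun ρ : ℝ => (R - M * Real.log K) * (Real.log ρ)⁻¹) atTop (nhds 0) := by
      have := hloginv.const_mul (R - M * Real.log K)
      simpa using this
    simpa using this.add h2
  have hhlim : Tendsto (fun ρ : ℝ => (M:ℝ) + (- (M * Real.log (c1 * K))) * (Real.log ρ)⁻¹)
      atTop (nhds (M : ℝ)) := by
    have h2 : Tendsto (fun ρ : ℝ => (- (M * Real.log (c1 * K))) * (Real.log ρ)⁻¹)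
        atTop (nhds 0) := by
      have := hloginv.const_mul (- (M * Real.log (c1 * K)))
      simpa using this
    simpa using (tendsto_const_nhds (x := (M:ℝ)) (f := atTop (α := ℝ))).add h2
  apply tendsto_of_tendsto_of_tendsto_of_le_of_le' hglim hhlim
  · -- lower bound eventually
    filter_upwards [eventually_ge_atTop (max K 2)] with ρ hρ
    have hρK : K ≤ ρ := le_trans (le_max_left _ _) hρ
    have hρ2 : (2:ℝ) ≤ ρ := le_trans (le_max_right _ _) hρ
    have hρpos : 0 < ρ := by linarith
    have hlogρ : 0 < Real.log ρ := Real.log_pos (by linarith)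
    set t : ℝ := K / ρ with htdef
    have ht0 : 0 < t := div_pos hK hρpos
    have ht1 : t ≤ 1 := (div_le_one hρpos).mpr hρK
    have hL := hlow t ht0 ht1
    have hU := hup t ht0.le
    have hP0 : 0 < (μ (Ev t)).toReal := lt_of_lt_of_le (by positivity) hL
    have hUval : Real.log (μ (Ev t)).toReal ≤ -R + M * Real.log K - M * Real.log ρ := by
      have := Real.log_le_log hP0 hU
      rw [Real.log_mul (Real.exp_ne_zero _) (by positivity), Real.log_exp,
        Real.log_pow, htdef, Real.log_div (ne_of_gt hK) (ne_of_gt hρpos)] at this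
      push_cast at this ⊢
      linarith
    show (M:ℝ) + (R - M * Real.log K) * (Real.log ρ)⁻¹ ≤
      -Real.log (μ (Ev t)).toReal / Real.log ρ
    rw [div_eq_mul_inv, ← sub_nonneg]
    have expand : -Real.log (μ (Ev t)).toReal * (Real.log ρ)⁻¹ -
        ((M:ℝ) + (R - M * Real.log K) * (Real.log ρ)⁻¹) =
        (-Real.log (μ (Ev t)).toReal - (M * Real.log ρ + (R - M * Real.log K)))
          * (Real.log ρ)⁻¹ := by
      field_simp
    rw [expand]
    apply mul_nonneg _ (by positivity)
    linarith
  · -- upper bound eventually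
    filter_upwards [eventually_ge_atTop (max K 2)] with ρ hρ
    have hρK : K ≤ ρ := le_trans (le_max_left _ _) hρ
    have hρ2 : (2:ℝ) ≤ ρ := le_trans (le_max_right _ _) hρ
    have hρpos : 0 < ρ := by linarith
    have hlogρ : 0 < Real.log ρ := Real.log_pos (by linarith)
    set t : ℝ := K / ρ with htdef
    have ht0 : 0 < t := div_pos hK hρpos
    have ht1 : t ≤ 1 := (div_le_one hρpos).mpr hρK
    have hL := hlow t ht0 ht1
    have hLval : M * Real.log (c1 * K) - M * Real.log ρ ≤ Real.log (μ (Ev t)).toReal := by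
      have h1 : Real.log ((c1*t)^M) ≤ Real.log (μ (Ev t)).toReal :=
        Real.log_le_log (by positivity) hL
      rw [Real.log_pow, htdef] at h1
      have h2 : c1 * (K / ρ) = (c1 * K) / ρ := by ring
      rw [h2, Real.log_div (by positivity) (ne_of_gt hρpos)] at h1
      push_cast at h1 ⊢
      linarith
    show -Real.log (μ (Ev t)).toReal / Real.log ρ ≤
      (M:ℝ) + (- (M * Real.log (c1 * K))) * (Real.log ρ)⁻¹
    rw [div_eq_mul_inv, ← sub_nonneg]
    have expand : (M:ℝ) + (- (M * Real.log (c1 * K))) * (Real.log ρ)⁻¹ -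
        -Real.log (μ (Ev t)).toReal * (Real.log ρ)⁻¹ =
        ((M * Real.log ρ - M * Real.log (c1 * K)) + Real.log (μ (Ev t)).toReal)
          * (Real.log ρ)⁻¹ := by
      field_simp
      ring
    rw [expand]
    apply mul_nonneg _ (by positivity)
    linarith
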